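/- Suppose an optimal triple (x*, q*, D*) exists. Then along any Mirror-P-EXTRA trajectory (x^k, q^k, D^k), the first-order optimality residuals decay at an o(1/k) rate: lim_{k→∞} k·‖U D^{k+1}‖_F² = 0 and lim_{k→∞} k·‖x^{k+1} − r + c Uᵀ q^{k+1}‖_F² = 0. -/

import Mathlib

open Matrix Filter Topology

noncomputable section

def frobSq {m p : ℕ} (A : Matrix (Fin m) (Fin p) ℝ) : ℝ := ∑ i, ∑ j, (A i j) ^ 2

def IsSubgradAt {p : ℕ} (h : (Fin p → ℝ) → ℝ) (d x : Fin p → ℝ) : Prop :=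
  ∀ y, h x + d ⬝ᵥ (y - x) ≤ h y

namespace MPE

lemma frobSq_nonneg {m p : ℕ} (A : Matrix (Fin m) (Fin p) ℝ) : 0 ≤ frobSq A :=
  Finset.sum_nonneg fun _ _ => Finset.sum_nonneg fun _ _ => sq_nonneg _

lemma frobSq_eq_trace {m p : ℕ} (A : Matrix (Fin m) (Fin p) ℝ) :
    frobSq A = (Aᵀ * A).trace := by
  simp only [frobSq, Matrix.trace, Matrix.diag, Matrix.mul_apply, Matrix.transpose_apply, sq]
  exact Finset.sum_comm

lemma frobSq_neg {m p : ℕ} (A : Matrix (Fin m) (Fin p) ℝ) : frobSq (-A) = frobSq A := by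
  simp [frobSq]

lemma trace_sum_dot {m p : ℕ} (A B : Matrix (Fin m) (Fin p) ℝ) :
    (Aᵀ * B).trace = ∑ i, A i ⬝ᵥ B i := by
  simp only [Matrix.trace, Matrix.diag, Matrix.mul_apply, Matrix.transpose_apply, dotProduct]
  exact Finset.sum_comm

lemma trace_symm {m p : ℕ} {P : Matrix (Fin m) (Fin m) ℝ} (hP : Pᵀ = P)
    (u v : Matrix (Fin m) (Fin p) ℝ) :
    (uᵀ * (P * v)).trace = (vᵀ * (P * u)).trace := by
  conv_lhs => rw [← Matrix.trace_transpose]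
  rw [Matrix.transpose_mul, Matrix.transpose_mul, Matrix.transpose_transpose, hP, Matrix.mul_assoc]

lemma trace_quad_nonneg {m p : ℕ} {P : Matrix (Fin m) (Fin m) ℝ} (hP : P.PosSemidef)
    (A : Matrix (Fin m) (Fin p) ℝ) : 0 ≤ (Aᵀ * (P * A)).trace := by
  have key : (Aᵀ * (P * A)).trace = ∑ j, (fun i => A i j) ⬝ᵥ P.mulVec (fun i => A i j) := by
    simp only [Matrix.trace, Matrix.diag, Matrix.mul_apply, Matrix.transpose_apply,
      dotProduct, Matrix.mulVec]
  rw [key]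
  exact Finset.sum_nonneg fun j _ => by simpa using hP.dotProduct_mulVec_nonneg (fun i => A i j)

lemma quad_neg {m p : ℕ} (P : Matrix (Fin m) (Fin m) ℝ) (v : Matrix (Fin m) (Fin p) ℝ) :
    ((-v)ᵀ * (P * (-v))).trace = (vᵀ * (P * v)).trace := by
  simp

lemma three_point {m p : ℕ} {P : Matrix (Fin m) (Fin m) ℝ} (hP : Pᵀ = P)
    (a b c : Matrix (Fin m) (Fin p) ℝ) :
    2 * ((a - b)ᵀ * (P * (a - c))).trace
      = ((a - b)ᵀ * (P * (a - b))).trace + ((a - c)ᵀ * (P * (a - c))).trace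
        - ((b - c)ᵀ * (P * (b - c))).trace := by
  simp only [Matrix.transpose_sub, Matrix.mul_sub, Matrix.sub_mul, Matrix.trace_sub]
  linarith [trace_symm hP a b, trace_symm hP a c, trace_symm hP b c]

lemma subgrad_mono {n p : ℕ} {h : Fin n → (Fin p → ℝ) → ℝ}
    {D1 D2 x1 x2 : Matrix (Fin n) (Fin p) ℝ}
    (h1 : ∀ i, IsSubgradAt (h i) (D1 i) (x1 i))
    (h2 : ∀ i, IsSubgradAt (h i) (D2 i) (x2 i)) :
    0 ≤ ((D1 - D2)ᵀ * (x1 - x2)).trace := by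
  rw [trace_sum_dot]
  refine Finset.sum_nonneg fun i _ => ?_
  have a1 := h1 i (x2 i)
  have a2 := h2 i (x1 i)
  have e1 : x2 i - x1 i = -(x1 i - x2 i) := by abel
  rw [e1, dotProduct_neg] at a1
  have e2 : (D1 - D2) i ⬝ᵥ (x1 - x2) i = D1 i ⬝ᵥ (x1 i - x2 i) - D2 i ⬝ᵥ (x1 i - x2 i) := by
    have : (D1 - D2) i = D1 i - D2 i := rfl
    have h' : (x1 - x2) i = x1 i - x2 i := rfl
    rw [this, h', sub_dotProduct]
  rw [e2]
  linarith

lemma frobSq_mul_le {m l p : ℕ} (M : Matrix (Fin m) (Fin l) ℝ) (A : Matrix (Fin l) (Fin p) ℝ) :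
    frobSq (M * A) ≤ frobSq M * frobSq A := by
  have key : ∀ i j, ((M * A) i j) ^ 2 ≤ (∑ k, M i k ^ 2) * (∑ k, A k j ^ 2) := fun i j => by
    rw [Matrix.mul_apply]
    exact Finset.sum_mul_sq_le_sq_mul_sq _ _ _
  calc frobSq (M * A) ≤ ∑ i, ∑ j, (∑ k, M i k ^ 2) * (∑ k, A k j ^ 2) :=
        Finset.sum_le_sum fun i _ => Finset.sum_le_sum fun j _ => key i j
    _ = (∑ i, ∑ k, M i k ^ 2) * (∑ j, ∑ k, A k j ^ 2) := (Finset.sum_mul_sum _ _ _ _).symm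
    _ = frobSq M * frobSq A := by
        unfold frobSq
        congr 1
        exact Finset.sum_comm

lemma tendsto_mul_of_summable_antitone {s : ℕ → ℝ} (hnn : ∀ k, 0 ≤ s k)
    (hmono : ∀ k, s (k + 1) ≤ s k) (hsum : Summable s) :
    Tendsto (fun k : ℕ => (k : ℝ) * s k) atTop (𝓝 0) := by
  have hant : Antitone s := antitone_nat_of_succ_le hmono
  have htend : Tendsto (fun m : ℕ => ∑' i, s (i + m)) atTop (𝓝 0) := tendsto_sum_nat_add s
  have hhalf : Tendsto (fun k : ℕ => k / 2) atTop atTop :=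
    Filter.tendsto_atTop_atTop.mpr fun b => ⟨2 * b, fun n hn => by omega⟩
  have hbd : ∀ k : ℕ, (k : ℝ) * s k ≤ 2 * ∑' i, s (i + k / 2) := by
    intro k
    have h1 : ((k - k / 2 : ℕ) : ℝ) * s k ≤ ∑ i ∈ Finset.Ico (k / 2) k, s i := by
      have := Finset.card_nsmul_le_sum (Finset.Ico (k / 2) k) s (s k)
        (fun x hx => hant (Finset.mem_Ico.mp hx).2.le)
      simpa [Nat.card_Ico, nsmul_eq_mul] using this
    have h2 : ∑ i ∈ Finset.Ico (k / 2) k, s i ≤ ∑' i, s (i + k / 2) := by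
      calc ∑ i ∈ Finset.Ico (k / 2) k, s i
          = ∑ i ∈ Finset.range (k - k / 2), s (k / 2 + i) := by rw [Finset.sum_Ico_eq_sum_range]
        _ = ∑ i ∈ Finset.range (k - k / 2), s (i + k / 2) := by
            exact Finset.sum_congr rfl fun i _ => by rw [Nat.add_comm]
        _ ≤ ∑' i, s (i + k / 2) :=
            Summable.sum_le_tsum _ (fun i _ => hnn _) ((summable_nat_add_iff (k / 2)).mpr hsum)
    have h3 : (k : ℝ) ≤ 2 * ((k - k / 2 : ℕ) : ℝ) := by
      have : k ≤ 2 * (k - k / 2) := by omega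
      exact_mod_cast this
    nlinarith [hnn k, mul_le_mul_of_nonneg_right h3 (hnn k)]
  refine squeeze_zero (fun k => mul_nonneg (Nat.cast_nonneg k) (hnn k)) hbd ?_
  have := (htend.comp hhalf).const_mul (2 : ℝ)
  simpa using this

end MPE
theorem stmt_7 (n p : ℕ) (hn : 2 ≤ n) (hp : 1 ≤ p)
    (U : Matrix (Fin (n - 1)) (Fin n) ℝ)
    (hU : ∀ v : Fin n → ℝ, U.mulVec v = 0 ↔ ∃ a : ℝ, v = fun _ => a)
    (r : Matrix (Fin n) (Fin p) ℝ)
    (h : Fin n → (Fin p → ℝ) → ℝ)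
    (hconv : ∀ i, ConvexOn ℝ Set.univ (h i))
    (c : ℝ) (hc : 0 < c)
    (β : Fin n → ℝ) (hβ : ∀ i, 0 < β i)
    (hPSD : (Matrix.diagonal β - c • (Uᵀ * U)).PosSemidef)
    -- Mirror-P-EXTRA trajectory
    (x D : ℕ → Matrix (Fin n) (Fin p) ℝ)
    (q : ℕ → Matrix (Fin (n - 1)) (Fin p) ℝ)
    (hsub : ∀ k i, IsSubgradAt (h i) (D k i) (x k i))
    (hrec1 : ∀ k : ℕ,
      x (k + 1) - r + c • (Uᵀ * q (k + 1))
        + (Matrix.diagonal β - c • (Uᵀ * U)) * (D (k + 1) - D k) = 0)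
    (hrec2 : ∀ k : ℕ, q (k + 1) = q k + U * D (k + 1))
    -- an optimal triple exists
    (hopt : ∃ (xs Ds : Matrix (Fin n) (Fin p) ℝ) (qs : Matrix (Fin (n - 1)) (Fin p) ℝ),
      (∀ i, IsSubgradAt (h i) (Ds i) (xs i)) ∧
      xs - r + c • (Uᵀ * qs) = 0 ∧
      U * Ds = 0) :
    Tendsto (fun k : ℕ => (k : ℝ) * frobSq (U * D (k + 1))) atTop (𝓝 0) ∧
    Tendsto (fun k : ℕ =>
      (k : ℝ) * frobSq (x (k + 1) - r + c • (Uᵀ * q (k + 1)))) atTop (𝓝 0) := by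
  obtain ⟨xs, Ds, qs, hsubs, hos1, hos2⟩ := hopt
  set P : Matrix (Fin n) (Fin n) ℝ := Matrix.diagonal β - c • (Uᵀ * U) with hPdef
  have hPsym : Pᵀ = P := by
    have h2 : Pᴴ = P := hPSD.1
    rwa [Matrix.conjTranspose_eq_transpose_of_trivial] at h2
  set s : ℕ → ℝ := fun k => c * frobSq (q (k + 1) - q k)
      + ((D (k + 1) - D k)ᵀ * (P * (D (k + 1) - D k))).trace with hsdef
  set a : ℕ → ℝ := fun k => c * frobSq (q k - qs)
      + ((D k - Ds)ᵀ * (P * (D k - Ds))).trace with hadef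
  have hUD : ∀ k : ℕ, U * D (k + 1) = q (k + 1) - q k := fun k => by rw [hrec2 k]; abel
  have hsnn : ∀ k, 0 ≤ s k := fun k => by
    simp only [hsdef]
    exact add_nonneg (mul_nonneg hc.le (MPE.frobSq_nonneg _)) (MPE.trace_quad_nonneg hPSD _)
  have hann : ∀ k, 0 ≤ a k := fun k => by
    simp only [hadef]
    exact add_nonneg (mul_nonneg hc.le (MPE.frobSq_nonneg _)) (MPE.trace_quad_nonneg hPSD _)
  -- key inequality A
  have keyA : ∀ k : ℕ, s k + a (k + 1) ≤ a k := by
    intro k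
    have hm := MPE.subgrad_mono (hsub (k + 1)) hsubs
    have hE : x (k + 1) - xs
        = -(c • (Uᵀ * (q (k + 1) - qs)) + P * (D (k + 1) - D k)) := by
      have h1 := hrec1 k
      have h0 : (x (k + 1) - xs)
          + (c • (Uᵀ * (q (k + 1) - qs)) + P * (D (k + 1) - D k)) = 0 := by
        have expand : (x (k + 1) - xs)
            + (c • (Uᵀ * (q (k + 1) - qs)) + P * (D (k + 1) - D k))
            = (x (k + 1) - r + c • (Uᵀ * q (k + 1)) + P * (D (k + 1) - D k))
              - (xs - r + c • (Uᵀ * qs)) := by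
          simp only [Matrix.mul_sub, smul_sub]; abel
        rw [expand, h1, hos1, sub_self]
      exact eq_neg_of_add_eq_zero_left h0
    rw [hE] at hm
    have hUM : U * (D (k + 1) - Ds) = q (k + 1) - q k := by
      rw [Matrix.mul_sub, hos2, sub_zero, hUD k]
    have hadj : ((D (k + 1) - Ds)ᵀ * (Uᵀ * (q (k + 1) - qs))).trace
        = ((q (k + 1) - q k)ᵀ * (q (k + 1) - qs)).trace := by
      rw [← Matrix.mul_assoc, ← Matrix.transpose_mul, hUM]
    have hexp : ((D (k + 1) - Ds)ᵀ
          * -(c • (Uᵀ * (q (k + 1) - qs)) + P * (D (k + 1) - D k))).trace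
        = -(c * ((q (k + 1) - q k)ᵀ * (q (k + 1) - qs)).trace
            + ((D (k + 1) - Ds)ᵀ * (P * (D (k + 1) - D k))).trace) := by
      simp only [Matrix.mul_neg, Matrix.mul_add, Matrix.mul_smul, Matrix.trace_neg,
        Matrix.trace_add, Matrix.trace_smul, smul_eq_mul, hadj]
    rw [hexp] at hm
    have h3q := MPE.three_point (P := (1 : Matrix (Fin (n - 1)) (Fin (n - 1)) ℝ))
      Matrix.transpose_one (q (k + 1)) (q k) qs
    simp only [Matrix.one_mul, ← MPE.frobSq_eq_trace] at h3q
    have h3D := MPE.three_point hPsym (D (k + 1)) Ds (D k)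
    have hneg : Ds - D k = -(D k - Ds) := by abel
    rw [hneg, MPE.quad_neg] at h3D
    have hq2 : 2 * (c * ((q (k + 1) - q k)ᵀ * (q (k + 1) - qs)).trace)
        = c * frobSq (q (k + 1) - q k) + c * frobSq (q (k + 1) - qs)
          - c * frobSq (q k - qs) := by
      linear_combination c * h3q
    simp only [hsdef, hadef]
    linarith [hm, hq2, h3D, MPE.trace_quad_nonneg hPSD (D (k + 1) - D k)]
  -- key inequality B
  have keyB : ∀ k : ℕ, s (k + 1) ≤ s k := by
    intro k
    have hm := MPE.subgrad_mono (hsub (k + 1 + 1)) (hsub (k + 1))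
    have hE2 : x (k + 1 + 1) - x (k + 1)
        = -(c • (Uᵀ * (q (k + 1 + 1) - q (k + 1)))
            + P * ((D (k + 1 + 1) - D (k + 1)) - (D (k + 1) - D k))) := by
      have h1 := hrec1 (k + 1)
      have h2 := hrec1 k
      have h0 : (x (k + 1 + 1) - x (k + 1))
          + (c • (Uᵀ * (q (k + 1 + 1) - q (k + 1)))
            + P * ((D (k + 1 + 1) - D (k + 1)) - (D (k + 1) - D k))) = 0 := by
        have expand : (x (k + 1 + 1) - x (k + 1))
            + (c • (Uᵀ * (q (k + 1 + 1) - q (k + 1)))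
              + P * ((D (k + 1 + 1) - D (k + 1)) - (D (k + 1) - D k)))
            = (x (k + 1 + 1) - r + c • (Uᵀ * q (k + 1 + 1))
                + P * (D (k + 1 + 1) - D (k + 1)))
              - (x (k + 1) - r + c • (Uᵀ * q (k + 1)) + P * (D (k + 1) - D k)) := by
          simp only [Matrix.mul_sub, smul_sub]; abel
        rw [expand, h1, h2, sub_self]
      exact eq_neg_of_add_eq_zero_left h0
    rw [hE2] at hm
    have hUM2 : U * (D (k + 1 + 1) - D (k + 1))
        = (q (k + 1 + 1) - q (k + 1)) - (q (k + 1) - q k) := by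
      rw [Matrix.mul_sub, hUD (k + 1), hUD k]
    have hadj2 : ((D (k + 1 + 1) - D (k + 1))ᵀ * (Uᵀ * (q (k + 1 + 1) - q (k + 1)))).trace
        = (((q (k + 1 + 1) - q (k + 1)) - (q (k + 1) - q k))ᵀ
            * (q (k + 1 + 1) - q (k + 1))).trace := by
      rw [← Matrix.mul_assoc, ← Matrix.transpose_mul, hUM2]
    have hexp2 : ((D (k + 1 + 1) - D (k + 1))ᵀ
          * -(c • (Uᵀ * (q (k + 1 + 1) - q (k + 1)))
            + P * ((D (k + 1 + 1) - D (k + 1)) - (D (k + 1) - D k)))).trace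
        = -(c * (((q (k + 1 + 1) - q (k + 1)) - (q (k + 1) - q k))ᵀ
              * (q (k + 1 + 1) - q (k + 1))).trace
            + ((D (k + 1 + 1) - D (k + 1))ᵀ
              * (P * ((D (k + 1 + 1) - D (k + 1)) - (D (k + 1) - D k)))).trace) := by
      simp only [Matrix.mul_neg, Matrix.mul_add, Matrix.mul_smul, Matrix.trace_neg,
        Matrix.trace_add, Matrix.trace_smul, smul_eq_mul, hadj2]
    rw [hexp2] at hm
    have h3q := MPE.three_point (P := (1 : Matrix (Fin (n - 1)) (Fin (n - 1)) ℝ))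
      Matrix.transpose_one (q (k + 1 + 1) - q (k + 1)) (q (k + 1) - q k) 0
    simp only [sub_zero, Matrix.one_mul, ← MPE.frobSq_eq_trace] at h3q
    have h3D := MPE.three_point hPsym (D (k + 1 + 1) - D (k + 1)) 0 (D (k + 1) - D k)
    simp only [sub_zero, zero_sub, MPE.quad_neg] at h3D
    have hq2 : 2 * (c * (((q (k + 1 + 1) - q (k + 1)) - (q (k + 1) - q k))ᵀ
          * (q (k + 1 + 1) - q (k + 1))).trace)
        = c * frobSq ((q (k + 1 + 1) - q (k + 1)) - (q (k + 1) - q k))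
          + c * frobSq (q (k + 1 + 1) - q (k + 1)) - c * frobSq (q (k + 1) - q k) := by
      linear_combination c * h3q
    simp only [hsdef]
    have hn1 : 0 ≤ c * frobSq ((q (k + 1 + 1) - q (k + 1)) - (q (k + 1) - q k)) :=
      mul_nonneg hc.le (MPE.frobSq_nonneg _)
    have hn2 : 0 ≤ (((D (k + 1 + 1) - D (k + 1)) - (D (k + 1) - D k))ᵀ
        * (P * ((D (k + 1 + 1) - D (k + 1)) - (D (k + 1) - D k)))).trace :=
      MPE.trace_quad_nonneg hPSD _
    linarith [hm, hq2, h3D, hn1, hn2]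
  -- summability of s
  have hpart : ∀ m : ℕ, ∑ i ∈ Finset.range m, s i ≤ a 0 := by
    intro m
    have h1 : ∑ i ∈ Finset.range m, s i ≤ ∑ i ∈ Finset.range m, (a i - a (i + 1)) :=
      Finset.sum_le_sum fun i _ => by linarith [keyA i]
    have h2 : ∑ i ∈ Finset.range m, (a i - a (i + 1)) = a 0 - a m :=
      Finset.sum_range_sub' a m
    linarith [hann m]
  have hsum : Summable s := summable_of_sum_range_le hsnn hpart
  have hks : Tendsto (fun k : ℕ => (k : ℝ) * s k) atTop (𝓝 0) :=
    MPE.tendsto_mul_of_summable_antitone hsnn keyB hsum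
  constructor
  · refine squeeze_zero (g := fun k : ℕ => (1 / c) * ((k : ℝ) * s k))
      (fun k => mul_nonneg (Nat.cast_nonneg k) (MPE.frobSq_nonneg _)) ?_ ?_
    · intro k
      rw [hUD k]
      have hfs : frobSq (q (k + 1) - q k) ≤ s k / c := by
        rw [le_div_iff₀ hc]
        have hQ := MPE.trace_quad_nonneg hPSD (D (k + 1) - D k)
        simp only [hsdef]
        linarith
      calc (k : ℝ) * frobSq (q (k + 1) - q k) ≤ (k : ℝ) * (s k / c) :=
            mul_le_mul_of_nonneg_left hfs (Nat.cast_nonneg k)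
        _ = (1 / c) * ((k : ℝ) * s k) := by ring
    · simpa using hks.const_mul (1 / c)
  · obtain ⟨S, hSpsd, hSS0⟩ : ∃ S : Matrix (Fin n) (Fin n) ℝ, S.PosSemidef ∧ S * S = P := by
      open scoped MatrixOrder in
      exact ⟨CFC.sqrt P, Matrix.nonneg_iff_posSemidef.mp (CFC.sqrt_nonneg P),
        CFC.sqrt_mul_sqrt_self P (Matrix.nonneg_iff_posSemidef.mpr hPSD)⟩
    have hSsym : (S)ᵀ = S := by
      have h2 : (S)ᴴ = S := hSpsd.1
      rwa [Matrix.conjTranspose_eq_transpose_of_trivial] at h2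
    have hSS : S * S = P := hSS0
    refine squeeze_zero (g := fun k : ℕ => frobSq S * ((k : ℝ) * s k))
      (fun k => mul_nonneg (Nat.cast_nonneg k) (MPE.frobSq_nonneg _)) ?_ ?_
    · intro k
      have hres : x (k + 1) - r + c • (Uᵀ * q (k + 1)) = -(P * (D (k + 1) - D k)) :=
        eq_neg_of_add_eq_zero_left (hrec1 k)
      rw [hres, MPE.frobSq_neg]
      have hQw : frobSq (S * (D (k + 1) - D k))
          = ((D (k + 1) - D k)ᵀ * (P * (D (k + 1) - D k))).trace := by
        rw [MPE.frobSq_eq_trace, Matrix.transpose_mul, hSsym, Matrix.mul_assoc,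
          ← Matrix.mul_assoc S S, hSS]
      have e1 : P * (D (k + 1) - D k)
          = S * (S * (D (k + 1) - D k)) := by
        rw [← Matrix.mul_assoc, hSS]
      have hq : ((D (k + 1) - D k)ᵀ * (P * (D (k + 1) - D k))).trace ≤ s k := by
        simp only [hsdef]
        have := mul_nonneg hc.le (MPE.frobSq_nonneg (q (k + 1) - q k))
        linarith
      calc (k : ℝ) * frobSq (P * (D (k + 1) - D k))
          = (k : ℝ) * frobSq (S * (S * (D (k + 1) - D k))) := by rw [e1]
        _ ≤ (k : ℝ) * (frobSq S * frobSq (S * (D (k + 1) - D k))) :=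
            mul_le_mul_of_nonneg_left (MPE.frobSq_mul_le _ _) (Nat.cast_nonneg k)
        _ = (k : ℝ) * (frobSq S
              * ((D (k + 1) - D k)ᵀ * (P * (D (k + 1) - D k))).trace) := by rw [hQw]
        _ ≤ (k : ℝ) * (frobSq S * s k) :=
            mul_le_mul_of_nonneg_left
              (mul_le_mul_of_nonneg_left hq (MPE.frobSq_nonneg _)) (Nat.cast_nonneg k)
        _ = frobSq S * ((k : ℝ) * s k) := by ring
    · simpa using hks.const_mul (frobSq S)
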